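/- Let n ≥ 2, α > 1 and 2*_α < p < 2* (where 2* = 2n/(n-2) if n ≥ 3, 2* = ∞ if n = 2). Let ψ be as above (comparable to r near 0 and to r^α at infinity). Then (∫₀^r ψ^{n-1} ds)^{1/p} (∫_r^∞ ψ^{-(n-1)} ds)^{1/2} tends to 0 both as r → 0 and as r → ∞. -/

import Mathlib

open Set Filter MeasureTheory intervalIntegral

lemma aux_sqrt_add {x y : ℝ} (hx : 0 ≤ x) (hy : 0 ≤ y) :
    (x + y) ^ (1/2:ℝ) ≤ x ^ (1/2:ℝ) + y ^ (1/2:ℝ) := by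
  rw [← Real.sqrt_eq_rpow, ← Real.sqrt_eq_rpow, ← Real.sqrt_eq_rpow]
  rw [show x + y = Real.sqrt x ^ 2 + Real.sqrt y ^ 2 by rw [Real.sq_sqrt hx, Real.sq_sqrt hy]]
  calc Real.sqrt (Real.sqrt x ^ 2 + Real.sqrt y ^ 2)
      ≤ Real.sqrt ((Real.sqrt x + Real.sqrt y) ^ 2) := by
        apply Real.sqrt_le_sqrt
        nlinarith [Real.sqrt_nonneg x, Real.sqrt_nonneg y,
          mul_nonneg (Real.sqrt_nonneg x) (Real.sqrt_nonneg y)]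
    _ = Real.sqrt x + Real.sqrt y := Real.sqrt_sq (by positivity)

lemma aux_rpow_tendsto_zero {t : ℝ} (ht : 0 < t) :
    Tendsto (fun r : ℝ => r ^ t) (nhdsWithin 0 (Ioi 0)) (nhds 0) := by
  have h := (Real.continuousAt_rpow_const 0 t (Or.inr ht.le)).tendsto
  rw [Real.zero_rpow ht.ne'] at h
  exact h.mono_left nhdsWithin_le_nhds

/-- Compactness criterion: for a weight `ψ` comparable to `r` near `0` and to `r^α` at
infinity, and `2*_α < p` (with `p < 2n/(n-2)` if `n ≥ 3`), the Muckenhoupt quantity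
tends to `0` both as `r → 0⁺` and as `r → ∞`. -/
theorem muckenhoupt_vanishing (n : ℕ) (hn : 2 ≤ n) (α : ℝ) (hα : 1 < α)
    (p : ℝ) (hp : 2 * (α * (n - 1) + 1) / (α * (n - 1) - 1) < p)
    (hp' : 3 ≤ n → p < 2 * n / ((n : ℝ) - 2))
    (ψ : ℝ → ℝ)
    (hcont : ContinuousOn ψ (Ioi 0))
    (hpos : ∀ r > (0:ℝ), 0 < ψ r)
    (κ₁ κ₂ : ℝ) (hκ₁ : 0 < κ₁) (hκ₂ : 0 < κ₂)
    (δ : ℝ) (hδ : 0 < δ)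
    (h0 : ∀ r ∈ Ioo (0:ℝ) δ, κ₁ * r ≤ ψ r ∧ ψ r ≤ κ₂ * r)
    (R : ℝ) (hR : 0 < R)
    (hinf : ∀ r ≥ R, κ₁ * r ^ α ≤ ψ r ∧ ψ r ≤ κ₂ * r ^ α) :
    Tendsto (fun r => (∫ s in (0:ℝ)..r, ψ s ^ (n - 1)) ^ (1 / p)
        * (∫ s in Ioi r, (ψ s ^ (n - 1))⁻¹) ^ (1 / 2 : ℝ))
      (nhdsWithin 0 (Ioi 0)) (nhds 0) ∧
    Tendsto (fun r => (∫ s in (0:ℝ)..r, ψ s ^ (n - 1)) ^ (1 / p)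
        * (∫ s in Ioi r, (ψ s ^ (n - 1))⁻¹) ^ (1 / 2 : ℝ))
      atTop (nhds 0) := by
  have hn2 : (2:ℝ) ≤ (n:ℝ) := by exact_mod_cast hn
  have hn1 : (1:ℝ) ≤ (n:ℝ) - 1 := by linarith
  have hcast : ((n - 1 : ℕ) : ℝ) = (n:ℝ) - 1 := by
    rw [Nat.cast_sub (by omega)]; simp
  set a : ℝ := α * ((n:ℝ) - 1) with ha_def
  have ha : 1 < a := by
    have : α ≤ a := le_mul_of_one_le_right (by linarith) hn1
    linarith
  have hp0 : 0 < p := by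
    have h1 : 0 < 2 * (a + 1) / (a - 1) := div_pos (by linarith) (by linarith)
    calc (0:ℝ) < 2 * (a + 1) / (a - 1) := h1
      _ < p := hp
  have hq : (a + 1) / p - (a - 1) / 2 < 0 := by
    have h2 : 2 * (a + 1) < p * (a - 1) := by
      rwa [div_lt_iff₀ (by linarith : (0:ℝ) < a - 1)] at hp
    have h3 : (a + 1) / p < (a - 1) / 2 := by
      rw [div_lt_div_iff₀ hp0 (by norm_num : (0:ℝ) < 2)]
      nlinarith
    linarith
  -- continuity facts
  have hFc : ContinuousOn (fun s => ψ s ^ (n - 1)) (Ioi (0:ℝ)) := hcont.pow _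
  have hGc : ContinuousOn (fun s => (ψ s ^ (n - 1))⁻¹) (Ioi (0:ℝ)) :=
    hFc.inv₀ (fun s hs => pow_ne_zero _ (hpos s hs).ne')
  -- pointwise bound at infinity for the inverse weight
  have hGbd : ∀ s : ℝ, R ≤ s → 0 < s →
      (ψ s ^ (n - 1))⁻¹ ≤ (κ₁ ^ (n - 1))⁻¹ * s ^ (-a) := by
    intro s hs hs0
    have h1 : κ₁ * s ^ α ≤ ψ s := (hinf s hs).1
    have h2 : (0:ℝ) < κ₁ * s ^ α := by positivity
    have h3 : (ψ s ^ (n - 1))⁻¹ ≤ ((κ₁ * s ^ α) ^ (n - 1))⁻¹ :=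
      inv_anti₀ (pow_pos h2 _) (pow_le_pow_left₀ h2.le h1 _)
    have h4 : ((κ₁ * s ^ α) ^ (n - 1))⁻¹ = (κ₁ ^ (n - 1))⁻¹ * s ^ (-a) := by
      rw [mul_pow, mul_inv, ← Real.rpow_natCast (s ^ α) (n - 1),
        ← Real.rpow_mul hs0.le, hcast, ← Real.rpow_neg hs0.le]
    linarith [h3, h4.le]
  -- integrability of the inverse weight on any Ioi r, r > 0
  have hGint : ∀ r : ℝ, 0 < r → IntegrableOn (fun s => (ψ s ^ (n - 1))⁻¹) (Ioi r) := by
    intro r hr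
    have hrR : r ≤ max r R := le_max_left _ _
    have hmax0 : 0 < max r R := lt_of_lt_of_le hr hrR
    rw [← Ioc_union_Ioi_eq_Ioi hrR]
    apply IntegrableOn.union
    · exact ((hGc.mono (fun x hx => lt_of_lt_of_le hr hx.1)).integrableOn_compact
        isCompact_Icc).mono_set Ioc_subset_Icc_self
    · refine Integrable.mono' (((integrableOn_Ioi_rpow_of_lt (by linarith : -a < -1)
        hmax0)).const_mul ((κ₁ ^ (n - 1))⁻¹)) ?_ ?_
      · exact (hGc.mono (fun x hx => lt_trans hmax0 hx)).aestronglyMeasurable measurableSet_Ioi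
      · refine (ae_restrict_iff' measurableSet_Ioi).2 (ae_of_all _ (fun x hx => ?_))
        have hx0 : 0 < x := lt_trans hmax0 hx
        rw [Real.norm_eq_abs, abs_of_nonneg (inv_nonneg.2 (pow_nonneg (hpos x hx0).le _))]
        exact hGbd x (le_trans (le_max_right r R) hx.le) hx0
  -- nonnegativity of the two factors
  have hX1nn : ∀ r : ℝ, 0 < r → 0 ≤ ∫ s in (0:ℝ)..r, ψ s ^ (n - 1) := by
    intro r hr
    rw [intervalIntegral.integral_of_le hr.le]
    exact setIntegral_nonneg measurableSet_Ioc (fun x hx => pow_nonneg (hpos x hx.1).le _)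
  have hX2nn : ∀ r : ℝ, 0 < r → 0 ≤ ∫ s in Ioi r, (ψ s ^ (n - 1))⁻¹ := by
    intro r hr
    exact setIntegral_nonneg measurableSet_Ioi
      (fun x hx => inv_nonneg.2 (pow_nonneg (hpos x (lt_trans hr hx)).le _))
  -- ======================= at infinity =======================
  set R₁ : ℝ := max (max R 1) δ with hR₁_def
  have hRR₁ : R ≤ R₁ := le_trans (le_max_left R 1) (le_max_left _ _)
  have h1R₁ : (1:ℝ) ≤ R₁ := le_trans (le_max_right R 1) (le_max_left _ _)
  have hδR₁ : δ ≤ R₁ := le_max_right _ _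
  have hR₁0 : (0:ℝ) < R₁ := lt_of_lt_of_le one_pos h1R₁
  obtain ⟨Mc, hMc⟩ := (isCompact_Icc (a := δ) (b := R₁)).exists_bound_of_continuousOn
    (hcont.mono (fun x hx => lt_of_lt_of_le hδ hx.1))
  set Mc' : ℝ := max Mc 0 with hMc'_def
  have hMc'0 : 0 ≤ Mc' := le_max_right _ _
  set D : ℝ := max (max ((κ₂ * δ) ^ (n - 1)) (Mc' ^ (n - 1))) (κ₂ ^ (n - 1)) with hD_def
  have hD0 : 0 ≤ D := le_trans (pow_nonneg hκ₂.le _) (le_max_right _ _)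
  -- pointwise bound for the weight on (0, r]
  have hFbd : ∀ r : ℝ, R₁ ≤ r → ∀ s ∈ Ioc (0:ℝ) r, ψ s ^ (n - 1) ≤ D * r ^ a := by
    intro r hrR₁ s hs
    have hr1 : (1:ℝ) ≤ r := le_trans h1R₁ hrR₁
    have hra : (1:ℝ) ≤ r ^ a := Real.one_le_rpow hr1 (by linarith)
    have key : ψ s ^ (n - 1) ≤ D ∨ ψ s ^ (n - 1) ≤ κ₂ ^ (n - 1) * r ^ a := by
      rcases lt_or_ge s δ with hsδ | hsδ
      · left
        have h1 := (h0 s ⟨hs.1, hsδ⟩).2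
        calc ψ s ^ (n - 1) ≤ (κ₂ * s) ^ (n - 1) :=
              pow_le_pow_left₀ (hpos s hs.1).le h1 _
          _ ≤ (κ₂ * δ) ^ (n - 1) := pow_le_pow_left₀ (mul_nonneg hκ₂.le hs.1.le)
              (mul_le_mul_of_nonneg_left hsδ.le hκ₂.le) _
          _ ≤ D := le_trans (le_max_left _ _) (le_max_left _ _)
      · rcases le_or_gt s R₁ with hsR₁ | hsR₁
        · left
          have h1 := hMc s ⟨hsδ, hsR₁⟩
          calc ψ s ^ (n - 1) ≤ Mc' ^ (n - 1) := by
                apply pow_le_pow_left₀ (hpos s hs.1).le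
                exact le_trans (le_trans (le_abs_self _) h1) (le_max_left _ _)
            _ ≤ D := le_trans (le_max_right _ _) (le_max_left _ _)
        · right
          have h1 := (hinf s (le_trans hRR₁ hsR₁.le)).2
          have hs0 : (0:ℝ) < s := hs.1
          calc ψ s ^ (n - 1) ≤ (κ₂ * s ^ α) ^ (n - 1) :=
                pow_le_pow_left₀ (hpos s hs.1).le h1 _
            _ = κ₂ ^ (n - 1) * s ^ a := by
                rw [mul_pow, ← Real.rpow_natCast (s ^ α) (n - 1),
                  ← Real.rpow_mul hs0.le, hcast]
            _ ≤ κ₂ ^ (n - 1) * r ^ a := by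
                apply mul_le_mul_of_nonneg_left _ (pow_nonneg hκ₂.le _)
                exact Real.rpow_le_rpow hs0.le hs.2 (by linarith)
    rcases key with h | h
    · exact le_trans h (le_mul_of_one_le_right hD0 hra)
    · exact le_trans h (mul_le_mul_of_nonneg_right
        (le_trans (le_max_right _ _) le_rfl) (by positivity))
  -- first factor bound at infinity
  have hFint : ∀ r : ℝ, R₁ ≤ r →
      (∫ s in (0:ℝ)..r, ψ s ^ (n - 1)) ≤ D * r ^ (a + 1) := by
    intro r hrR₁
    have hr0 : (0:ℝ) < r := lt_of_lt_of_le hR₁0 hrR₁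
    rw [intervalIntegral.integral_of_le hr0.le]
    have hfin : volume (Ioc (0:ℝ) r) < ⊤ := by
      rw [Real.volume_Ioc]; exact ENNReal.ofReal_lt_top
    have hbdd : ∀ x ∈ Ioc (0:ℝ) r, ‖ψ x ^ (n - 1)‖ ≤ D * r ^ a := by
      intro x hx
      rw [Real.norm_eq_abs, abs_of_nonneg (pow_nonneg (hpos x hx.1).le _)]
      exact hFbd r hrR₁ x hx
    have hmea : AEStronglyMeasurable (fun s => ψ s ^ (n - 1))
        (volume.restrict (Ioc (0:ℝ) r)) :=
      (hFc.mono (fun x hx => hx.1)).aestronglyMeasurable measurableSet_Ioc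
    have hb := norm_setIntegral_le_of_norm_le_const (μ := volume) (s := Ioc (0:ℝ) r)
      (C := D * r ^ a) hfin hbdd
    calc (∫ s in Ioc (0:ℝ) r, ψ s ^ (n - 1))
          ≤ ‖∫ s in Ioc (0:ℝ) r, ψ s ^ (n - 1)‖ := le_abs_self _
        _ ≤ (D * r ^ a) * (volume (Ioc (0:ℝ) r)).toReal := hb
        _ = D * r ^ (a + 1) := by
            rw [Real.volume_Ioc, sub_zero, ENNReal.toReal_ofReal hr0.le,
              Real.rpow_add_one hr0.ne', mul_assoc]
  -- second factor bound at infinity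
  have hGinf : ∀ r : ℝ, R₁ ≤ r →
      (∫ s in Ioi r, (ψ s ^ (n - 1))⁻¹)
        ≤ ((κ₁ ^ (n - 1))⁻¹ / (a - 1)) * r ^ (-(a - 1)) := by
    intro r hrR₁
    have hr0 : (0:ℝ) < r := lt_of_lt_of_le hR₁0 hrR₁
    have hint2 : IntegrableOn (fun s : ℝ => (κ₁ ^ (n - 1))⁻¹ * s ^ (-a)) (Ioi r) :=
      (integrableOn_Ioi_rpow_of_lt (by linarith : -a < -1) hr0).const_mul _
    calc (∫ s in Ioi r, (ψ s ^ (n - 1))⁻¹)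
        ≤ ∫ s in Ioi r, (κ₁ ^ (n - 1))⁻¹ * s ^ (-a) := by
          apply setIntegral_mono_on (hGint r hr0) hint2 measurableSet_Ioi
          intro x hx
          exact hGbd x (le_trans hRR₁ (le_trans hrR₁ hx.le)) (lt_trans hr0 hx)
      _ = (κ₁ ^ (n - 1))⁻¹ * ∫ s in Ioi r, s ^ (-a) := by
          rw [MeasureTheory.integral_const_mul]
      _ = ((κ₁ ^ (n - 1))⁻¹ / (a - 1)) * r ^ (-(a - 1)) := by
          rw [integral_Ioi_rpow_of_lt (by linarith : -a < -1) hr0,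
            show -a + 1 = -(a - 1) by ring, neg_div_neg_eq]
          ring
  -- the atTop limit
  have hE0 : 0 ≤ (κ₁ ^ (n - 1))⁻¹ / (a - 1) :=
    div_nonneg (inv_nonneg.2 (pow_nonneg hκ₁.le _)) (by linarith)
  have key2 : Tendsto (fun r => (∫ s in (0:ℝ)..r, ψ s ^ (n - 1)) ^ (1 / p)
        * (∫ s in Ioi r, (ψ s ^ (n - 1))⁻¹) ^ (1 / 2 : ℝ)) atTop (nhds 0) := by
    set q : ℝ := (a + 1) * (1 / p) + (-(a - 1)) * (1 / 2) with hq_def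
    have hqneg : q < 0 := by
      rw [hq_def, show (a + 1) * (1 / p) + (-(a - 1)) * (1 / 2)
        = (a + 1) / p - (a - 1) / 2 from by ring]
      exact hq
    set C : ℝ := D ^ (1 / p) * ((κ₁ ^ (n - 1))⁻¹ / (a - 1)) ^ (1 / 2 : ℝ) with hC_def
    apply squeeze_zero' (g := fun r => C * r ^ q)
    · filter_upwards [eventually_ge_atTop R₁] with r hr
      have hr0 : (0:ℝ) < r := lt_of_lt_of_le hR₁0 hr
      exact mul_nonneg (Real.rpow_nonneg (hX1nn r hr0) _)
        (Real.rpow_nonneg (hX2nn r hr0) _)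
    · filter_upwards [eventually_ge_atTop R₁] with r hr
      have hr0 : (0:ℝ) < r := lt_of_lt_of_le hR₁0 hr
      have h1 : (∫ s in (0:ℝ)..r, ψ s ^ (n - 1)) ^ (1 / p)
          ≤ (D * r ^ (a + 1)) ^ (1 / p) :=
        Real.rpow_le_rpow (hX1nn r hr0) (hFint r hr) (by positivity)
      have h2 : (∫ s in Ioi r, (ψ s ^ (n - 1))⁻¹) ^ (1 / 2 : ℝ)
          ≤ (((κ₁ ^ (n - 1))⁻¹ / (a - 1)) * r ^ (-(a - 1))) ^ (1 / 2 : ℝ) :=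
        Real.rpow_le_rpow (hX2nn r hr0) (hGinf r hr) (by norm_num)
      calc (∫ s in (0:ℝ)..r, ψ s ^ (n - 1)) ^ (1 / p)
            * (∫ s in Ioi r, (ψ s ^ (n - 1))⁻¹) ^ (1 / 2 : ℝ)
          ≤ (D * r ^ (a + 1)) ^ (1 / p)
            * (((κ₁ ^ (n - 1))⁻¹ / (a - 1)) * r ^ (-(a - 1))) ^ (1 / 2 : ℝ) :=
            mul_le_mul h1 h2 (Real.rpow_nonneg (hX2nn r hr0) _)
              (Real.rpow_nonneg (mul_nonneg hD0 (Real.rpow_nonneg hr0.le _)) _)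
        _ = C * r ^ q := by
            rw [Real.mul_rpow hD0 (Real.rpow_nonneg hr0.le _),
              Real.mul_rpow hE0 (Real.rpow_nonneg hr0.le _),
              ← Real.rpow_mul hr0.le, ← Real.rpow_mul hr0.le,
              mul_mul_mul_comm, ← Real.rpow_add hr0]
    · have ht : Tendsto (fun r : ℝ => r ^ q) atTop (nhds 0) := by
        simpa [neg_neg] using tendsto_rpow_neg_atTop (show 0 < -q by linarith)
      simpa using ht.const_mul C
  -- ======================= at zero =======================
  set c : ℝ := δ / 2 with hc_def
  have hc0 : (0:ℝ) < c := half_pos hδ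
  have hcδ : c < δ := by rw [hc_def]; linarith
  set ε : ℝ := (n:ℝ) / p - ((n:ℝ) - 2) / 2 with hε_def
  have hε : 0 < ε := by
    rcases lt_or_ge n 3 with h3 | h3
    · have hn2' : (n:ℝ) = 2 := by
        have : n = 2 := by omega
        rw [this]; norm_num
      rw [hε_def, hn2']
      norm_num
      positivity
    · have hp2 := hp' h3
      have hn3 : (3:ℝ) ≤ (n:ℝ) := by exact_mod_cast h3
      have h2 : p * ((n:ℝ) - 2) < 2 * n := by
        rwa [lt_div_iff₀ (by linarith : (0:ℝ) < (n:ℝ) - 2)] at hp2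
      rw [hε_def, sub_pos, div_lt_div_iff₀ (by norm_num) hp0]
      nlinarith
  set β : ℝ := (n:ℝ) - 2 + ε with hβ_def
  have hβ0 : 0 < β := by rw [hβ_def]; linarith
  set K : ℝ := ∫ s in Ioi c, (ψ s ^ (n - 1))⁻¹ with hK_def
  have hK0 : 0 ≤ K := hX2nn c hc0
  set A : ℝ := (κ₁ ^ (n - 1))⁻¹ * c ^ ε / β with hA_def
  have hA0 : 0 ≤ A := div_nonneg
    (mul_nonneg (inv_nonneg.2 (pow_nonneg hκ₁.le _)) (Real.rpow_nonneg hc0.le _)) hβ0.le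
  -- second factor bound near zero
  have hG0 : ∀ r ∈ Ioo (0:ℝ) c,
      (∫ s in Ioi r, (ψ s ^ (n - 1))⁻¹) ≤ A * r ^ (-β) + K := by
    intro r hr
    have hr0 := hr.1
    have hrc := hr.2
    have hIoc : IntegrableOn (fun s => (ψ s ^ (n - 1))⁻¹) (Ioc r c) :=
      ((hGc.mono (fun x hx => lt_of_lt_of_le hr0 hx.1)).integrableOn_compact
        isCompact_Icc).mono_set Ioc_subset_Icc_self
    have hsplit : (∫ s in Ioi r, (ψ s ^ (n - 1))⁻¹)
        = (∫ s in Ioc r c, (ψ s ^ (n - 1))⁻¹) + K := by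
      rw [hK_def, ← setIntegral_union (Ioc_disjoint_Ioi le_rfl) measurableSet_Ioi hIoc
        (hGint c hc0), Ioc_union_Ioi_eq_Ioi hrc.le]
    rw [hsplit]
    have hrint : IntegrableOn (fun s : ℝ => s ^ (-(β + 1))) (Ioi r) :=
      integrableOn_Ioi_rpow_of_lt (by linarith) hr0
    have step1 : (∫ s in Ioc r c, (ψ s ^ (n - 1))⁻¹)
        ≤ ∫ s in Ioc r c, ((κ₁ ^ (n - 1))⁻¹ * c ^ ε) * s ^ (-(β + 1)) := by
      apply setIntegral_mono_on hIoc ((hrint.mono_set Ioc_subset_Ioi_self).const_mul _)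
        measurableSet_Ioc
      intro x hx
      have hx0 : (0:ℝ) < x := lt_trans hr0 hx.1
      have hxδ : x < δ := lt_of_le_of_lt hx.2 hcδ
      have h1 : κ₁ * x ≤ ψ x := (h0 x ⟨hx0, hxδ⟩).1
      have h2 : (0:ℝ) < κ₁ * x := by positivity
      have h3 : (ψ x ^ (n - 1))⁻¹ ≤ ((κ₁ * x) ^ (n - 1))⁻¹ :=
        inv_anti₀ (pow_pos h2 _) (pow_le_pow_left₀ h2.le h1 _)
      have h4 : ((κ₁ * x) ^ (n - 1))⁻¹ = (κ₁ ^ (n - 1))⁻¹ * x ^ (-((n:ℝ) - 1)) := by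
        rw [mul_pow, mul_inv, ← Real.rpow_natCast x (n - 1), hcast, ← Real.rpow_neg hx0.le]
      have h5 : x ^ (-((n:ℝ) - 1)) = x ^ (-(β + 1)) * x ^ ε := by
        rw [← Real.rpow_add hx0]; congr 1; rw [hβ_def]; ring
      have h6 : x ^ (-(β + 1)) * x ^ ε ≤ x ^ (-(β + 1)) * c ^ ε :=
        mul_le_mul_of_nonneg_left (Real.rpow_le_rpow hx0.le hx.2 hε.le)
          (Real.rpow_nonneg hx0.le _)
      calc (ψ x ^ (n - 1))⁻¹ ≤ ((κ₁ * x) ^ (n - 1))⁻¹ := h3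
        _ = (κ₁ ^ (n - 1))⁻¹ * (x ^ (-(β + 1)) * x ^ ε) := by rw [h4, h5]
        _ ≤ (κ₁ ^ (n - 1))⁻¹ * (x ^ (-(β + 1)) * c ^ ε) :=
            mul_le_mul_of_nonneg_left h6 (inv_nonneg.2 (pow_nonneg hκ₁.le _))
        _ = ((κ₁ ^ (n - 1))⁻¹ * c ^ ε) * x ^ (-(β + 1)) := by ring
    have step2 : (∫ s in Ioc r c, ((κ₁ ^ (n - 1))⁻¹ * c ^ ε) * s ^ (-(β + 1)))
        ≤ A * r ^ (-β) := by
      rw [MeasureTheory.integral_const_mul]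
      have hmono : (∫ s in Ioc r c, s ^ (-(β + 1))) ≤ ∫ s in Ioi r, s ^ (-(β + 1)) :=
        setIntegral_mono_set hrint
          ((ae_restrict_iff' measurableSet_Ioi).2 (ae_of_all _ (fun x hx =>
            Real.rpow_nonneg (le_of_lt (lt_trans hr0 hx)) _)))
          (HasSubset.Subset.eventuallyLE Ioc_subset_Ioi_self)
      have hcε : 0 ≤ (κ₁ ^ (n - 1))⁻¹ * c ^ ε :=
        mul_nonneg (inv_nonneg.2 (pow_nonneg hκ₁.le _)) (Real.rpow_nonneg hc0.le _)
      calc (κ₁ ^ (n - 1))⁻¹ * c ^ ε * ∫ s in Ioc r c, s ^ (-(β + 1))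
          ≤ (κ₁ ^ (n - 1))⁻¹ * c ^ ε * ∫ s in Ioi r, s ^ (-(β + 1)) :=
            mul_le_mul_of_nonneg_left hmono hcε
        _ = A * r ^ (-β) := by
            rw [integral_Ioi_rpow_of_lt (by linarith) hr0,
              show -(β + 1) + 1 = -β from by ring, neg_div_neg_eq, hA_def]
            ring
    linarith [step1, step2]
  -- first factor bound near zero
  have hF0 : ∀ r ∈ Ioo (0:ℝ) c,
      (∫ s in (0:ℝ)..r, ψ s ^ (n - 1)) ≤ κ₂ ^ (n - 1) * r ^ n := by
    intro r hr
    have hr0 := hr.1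
    rw [intervalIntegral.integral_of_le hr0.le]
    have hfin : volume (Ioc (0:ℝ) r) < ⊤ := by
      rw [Real.volume_Ioc]; exact ENNReal.ofReal_lt_top
    have hbdd : ∀ x ∈ Ioc (0:ℝ) r, ‖ψ x ^ (n - 1)‖ ≤ (κ₂ * r) ^ (n - 1) := by
      intro x hx
      rw [Real.norm_eq_abs, abs_of_nonneg (pow_nonneg (hpos x hx.1).le _)]
      have hxδ : x < δ := lt_of_le_of_lt hx.2 (lt_trans hr.2 hcδ)
      calc ψ x ^ (n - 1) ≤ (κ₂ * x) ^ (n - 1) :=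
            pow_le_pow_left₀ (hpos x hx.1).le (h0 x ⟨hx.1, hxδ⟩).2 _
        _ ≤ (κ₂ * r) ^ (n - 1) := pow_le_pow_left₀ (mul_nonneg hκ₂.le hx.1.le)
            (mul_le_mul_of_nonneg_left hx.2 hκ₂.le) _
    have hmea : AEStronglyMeasurable (fun s => ψ s ^ (n - 1))
        (volume.restrict (Ioc (0:ℝ) r)) :=
      (hFc.mono (fun x hx => hx.1)).aestronglyMeasurable measurableSet_Ioc
    have hb := norm_setIntegral_le_of_norm_le_const (μ := volume) hfin hbdd
    calc (∫ s in Ioc (0:ℝ) r, ψ s ^ (n - 1))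
        ≤ ‖∫ s in Ioc (0:ℝ) r, ψ s ^ (n - 1)‖ := le_abs_self _
      _ ≤ (κ₂ * r) ^ (n - 1) * (volume (Ioc (0:ℝ) r)).toReal := hb
      _ = κ₂ ^ (n - 1) * r ^ n := by
          rw [Real.volume_Ioc, sub_zero, ENNReal.toReal_ofReal hr0.le, mul_pow,
            mul_assoc, ← pow_succ, show n - 1 + 1 = n from by omega]
  -- the limit at zero
  have key1 : Tendsto (fun r => (∫ s in (0:ℝ)..r, ψ s ^ (n - 1)) ^ (1 / p)
        * (∫ s in Ioi r, (ψ s ^ (n - 1))⁻¹) ^ (1 / 2 : ℝ))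
      (nhdsWithin 0 (Ioi 0)) (nhds 0) := by
    set C₂ : ℝ := (κ₂ ^ (n - 1) : ℝ) ^ (1 / p) with hC₂_def
    apply squeeze_zero' (g := fun r => C₂ * A ^ (1/2:ℝ) * r ^ (ε/2)
      + C₂ * K ^ (1/2:ℝ) * r ^ ((n:ℝ)/p))
    · filter_upwards [Ioo_mem_nhdsGT hc0] with r hr
      exact mul_nonneg (Real.rpow_nonneg (hX1nn r hr.1) _)
        (Real.rpow_nonneg (hX2nn r hr.1) _)
    · filter_upwards [Ioo_mem_nhdsGT hc0] with r hr
      have hr0 := hr.1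
      have h1 : (∫ s in (0:ℝ)..r, ψ s ^ (n - 1)) ^ (1 / p)
          ≤ (κ₂ ^ (n - 1) * r ^ n) ^ (1 / p) :=
        Real.rpow_le_rpow (hX1nn r hr0) (hF0 r hr) (by positivity)
      have h2 : (∫ s in Ioi r, (ψ s ^ (n - 1))⁻¹) ^ (1 / 2 : ℝ)
          ≤ (A * r ^ (-β) + K) ^ (1 / 2 : ℝ) :=
        Real.rpow_le_rpow (hX2nn r hr0) (hG0 r hr) (by norm_num)
      have h3 : (A * r ^ (-β) + K) ^ (1/2:ℝ) ≤ (A * r ^ (-β)) ^ (1/2:ℝ) + K ^ (1/2:ℝ) :=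
        aux_sqrt_add (mul_nonneg hA0 (Real.rpow_nonneg hr0.le _)) hK0
      have hRHSnn : 0 ≤ κ₂ ^ (n - 1) * r ^ n := by positivity
      calc (∫ s in (0:ℝ)..r, ψ s ^ (n - 1)) ^ (1 / p)
            * (∫ s in Ioi r, (ψ s ^ (n - 1))⁻¹) ^ (1 / 2 : ℝ)
          ≤ (κ₂ ^ (n - 1) * r ^ n) ^ (1 / p)
            * ((A * r ^ (-β)) ^ (1/2:ℝ) + K ^ (1/2:ℝ)) :=
            mul_le_mul h1 (h2.trans h3) (Real.rpow_nonneg (hX2nn r hr0) _)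
              (Real.rpow_nonneg hRHSnn _)
        _ = C₂ * A ^ (1/2:ℝ) * r ^ (ε/2) + C₂ * K ^ (1/2:ℝ) * r ^ ((n:ℝ)/p) := by
            rw [Real.mul_rpow (pow_nonneg hκ₂.le _) (pow_nonneg hr0.le _),
              Real.mul_rpow hA0 (Real.rpow_nonneg hr0.le _),
              ← Real.rpow_natCast r n, ← Real.rpow_mul hr0.le, ← Real.rpow_mul hr0.le,
              show (n:ℝ) * (1/p) = (n:ℝ)/p from by ring]
            have e1 : r ^ ((n:ℝ)/p) * r ^ ((-β) * (1/2:ℝ)) = r ^ (ε/2) := by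
              rw [← Real.rpow_add hr0]; congr 1; rw [hβ_def, hε_def]; ring
            rw [mul_add, ← e1]; ring
    · have ht := Tendsto.add
        (Tendsto.const_mul (C₂ * A ^ (1/2:ℝ)) (aux_rpow_tendsto_zero (half_pos hε)))
        (Tendsto.const_mul (C₂ * K ^ (1/2:ℝ))
          (aux_rpow_tendsto_zero (div_pos (by linarith : (0:ℝ) < (n:ℝ)) hp0)))
      simpa using ht
  exact ⟨key1, key2⟩
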